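/- Suppose θ is a limit ordinal, ⟨X_i : i < θ⟩ is a ⊆-increasing sequence of sets with union X, κ₁ ≤ κ₂ ≤ |X₀| are infinite cardinals, and for each i < θ the family D_i ⊆ [X_i]^{κ₁} is dense in [X_i]^{κ₂}. Then D := ⋃_{i<θ} D_i is dense in [X]^{κ₃} for every cardinal κ₃ with κ₂ < κ₃ ≤ |X|, and if cf(θ) ≠ cf(κ₂) then D is also dense in [X]^{κ₂}. -/

import Mathlib

open Cardinal

private lemma exists_inter_card_ge {α : Type} (θ : Ordinal.{0}) (hθ : Order.IsSuccLimit θ)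
    (X : Ordinal.{0} → Set α)
    (hmono : ∀ i j : Ordinal, i ≤ j → j < θ → X i ⊆ X j)
    (κ₂ : Cardinal.{0}) (hκ₂ : ℵ₀ ≤ κ₂)
    (Y : Set α) (hY : Y ⊆ ⋃ i ∈ Set.Iio θ, X i)
    (hbig : κ₂ < #Y ∨ (#Y = κ₂ ∧ θ.cof ≠ κ₂.ord.cof)) :
    ∃ i < θ, κ₂ ≤ #(↥(Y ∩ X i)) := by
  have hYge : κ₂ ≤ #Y := by
    rcases hbig with h | h
    · exact h.le
    · exact h.1.ge
  rcases lt_or_ge κ₂ θ.cof with hcof | hcof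
  · -- cof θ > κ₂ : any κ₂-sized subset of Y is inside some X j
    obtain ⟨Y', hY'sub, hY'card⟩ := Cardinal.le_mk_iff_exists_subset.1 hYge
    have hchoice : ∀ y : Y', ∃ i : Ordinal, i < θ ∧ (y : α) ∈ X i := by
      intro y
      have := hY (hY'sub y.2)
      simp only [Set.mem_iUnion, Set.mem_Iio] at this
      obtain ⟨i, hi, hyi⟩ := this
      exact ⟨i, hi, hyi⟩
    choose g hg1 hg2 using hchoice
    have hcard : #(↥Y') < θ.cof := by rwa [hY'card]
    have hsup : (⨆ y, g y) < θ := Ordinal.iSup_lt_ord hcard hg1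
    refine ⟨⨆ y, g y, hsup, ?_⟩
    rw [← hY'card]
    apply Cardinal.mk_le_mk_of_subset
    intro y hy
    exact ⟨hY'sub hy,
      hmono (g ⟨y, hy⟩) (⨆ y, g y) (Ordinal.le_iSup g ⟨y, hy⟩) hsup (hg2 ⟨y, hy⟩)⟩
  · -- cof θ ≤ κ₂
    by_contra hcon
    push_neg at hcon
    have hsmall : ∀ i < θ, #(↥(Y ∩ X i)) < κ₂ := hcon
    obtain ⟨ι, f, hlsub, hι⟩ := Ordinal.exists_lsub_cof θ
    have hfθ : ∀ i, f i < θ := fun i => hlsub ▸ Ordinal.lt_lsub f i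
    have hYcover : Y ⊆ ⋃ i : ι, (Y ∩ X (f i)) := by
      intro y hy
      have := hY hy
      simp only [Set.mem_iUnion, Set.mem_Iio] at this
      obtain ⟨j, hj, hyj⟩ := this
      have : j < Ordinal.lsub f := hlsub ▸ hj
      obtain ⟨i, hji⟩ := Ordinal.lt_lsub_iff.1 this
      exact Set.mem_iUnion.2 ⟨i, hy, hmono j (f i) hji (hfθ i) hyj⟩
    set s : Cardinal := ⨆ i : ι, #(↥(Y ∩ X (f i))) with hs
    have hterm : ∀ i : ι, #(↥(Y ∩ X (f i))) < κ₂ := fun i => hsmall _ (hfθ i)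
    have hsle : s ≤ κ₂ := ciSup_le' fun i => (hterm i).le
    have hYle : #Y ≤ #ι * s := by
      calc #Y ≤ #(↥(⋃ i : ι, (Y ∩ X (f i)))) := Cardinal.mk_le_mk_of_subset hYcover
        _ ≤ #ι * s := Cardinal.mk_iUnion_le _
    rcases hbig with h | ⟨hYeq, hne⟩
    · -- κ₂ < #Y ≤ #ι * s ≤ κ₂ * κ₂ = κ₂
      have : #Y ≤ κ₂ := by
        calc #Y ≤ #ι * s := hYle
          _ ≤ κ₂ * κ₂ := mul_le_mul' (hι ▸ hcof) hsle
          _ = κ₂ := Cardinal.mul_eq_self hκ₂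
      exact absurd this (not_le.2 h)
    · have hcoflt : θ.cof < κ₂ := by
        rcases lt_or_eq_of_le hcof with h | h
        · exact h
        · exfalso
          apply hne
          have hreg : (θ.cof).IsRegular := Cardinal.isRegular_cof hθ
          rw [h] at hreg
          rw [h, hreg.cof_eq]
      have hseq : s = κ₂ := by
        rcases lt_or_eq_of_le hsle with h | h
        · exfalso
          have : #Y < κ₂ := hYle.trans_lt (Cardinal.mul_lt_of_lt hκ₂ (hι ▸ hcoflt) h)
          rw [hYeq] at this
          exact lt_irrefl _ this
        · exact h
      -- Direction 1 : κ₂.ord.cof ≤ θ.cof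
      have hdir1 : κ₂.ord.cof ≤ θ.cof := by
        set G : ι → Ordinal := fun i => (#(↥(Y ∩ X (f i)))).ord with hG
        have hGlsub : Ordinal.lsub G = κ₂.ord := by
          apply le_antisymm
          · exact Ordinal.lsub_le fun i => Cardinal.ord_lt_ord.2 (hterm i)
          · by_contra hlt
            push_neg at hlt
            have hcard : (Ordinal.lsub G).card < κ₂ := Cardinal.lt_ord.1 hlt
            have : s ≤ (Ordinal.lsub G).card := by
              apply ciSup_le'
              intro i
              have : G i ≤ Ordinal.lsub G := (Ordinal.lt_lsub G i).le
              have := Ordinal.card_le_card this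
              rwa [hG, Cardinal.card_ord] at this
            rw [hseq] at this
            exact absurd hcard (not_lt.2 this)
        calc κ₂.ord.cof = (Ordinal.lsub G).cof := by rw [hGlsub]
          _ ≤ #ι := Ordinal.cof_lsub_le G
          _ = θ.cof := hι
      -- Direction 2 : θ.cof ≤ κ₂.ord.cof
      have hdir2 : θ.cof ≤ κ₂.ord.cof := by
        obtain ⟨ι', h, hlsub', hι'⟩ := Ordinal.exists_lsub_cof κ₂.ord
        have hchoice : ∀ j : ι', ∃ i : ι, (h j).card < #(↥(Y ∩ X (f i))) := by
          intro j
          by_contra hc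
          push_neg at hc
          have : s ≤ (h j).card := ciSup_le' hc
          rw [hseq] at this
          have : κ₂.ord ≤ h j := by rwa [← Cardinal.ord_le] at this
          exact absurd (hlsub' ▸ Ordinal.lt_lsub h j) (not_lt.2 this)
        choose e he using hchoice
        have helsub : Ordinal.lsub (fun j => f (e j)) = θ := by
          apply le_antisymm
          · exact Ordinal.lsub_le fun j => hfθ _
          · by_contra hlt
            push_neg at hlt
            set η := Ordinal.lsub (fun j => f (e j)) with hη
            have hηθ : η < θ := hlt
            have hbound : ∀ j : ι', h j < (#(↥(Y ∩ X η))).ord := by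
              intro j
              have h1 : f (e j) ≤ η := (Ordinal.lt_lsub (fun j => f (e j)) j).le
              have h2 : #(↥(Y ∩ X (f (e j)))) ≤ #(↥(Y ∩ X η)) := by
                apply Cardinal.mk_le_mk_of_subset
                exact fun y hy => ⟨hy.1, hmono _ _ h1 hηθ hy.2⟩
              have h3 : (h j).card < #(↥(Y ∩ X η)) := (he j).trans_le h2
              rwa [← Cardinal.lt_ord] at h3
            have : κ₂.ord ≤ (#(↥(Y ∩ X η))).ord := hlsub' ▸ Ordinal.lsub_le hbound
            have : κ₂ ≤ #(↥(Y ∩ X η)) := Cardinal.ord_le_ord.1 this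
            exact absurd this (not_le.2 (hsmall _ hηθ))
        calc θ.cof = (Ordinal.lsub (fun j => f (e j))).cof := by rw [helsub]
          _ ≤ #ι' := Ordinal.cof_lsub_le _
          _ = κ₂.ord.cof := hι'
      exact hne (le_antisymm hdir2 hdir1)

theorem union_of_dense_families {α : Type} (θ : Ordinal.{0}) (hθ : Order.IsSuccLimit θ)
    (X : Ordinal.{0} → Set α)
    (hmono : ∀ i j : Ordinal, i ≤ j → j < θ → X i ⊆ X j)
    (κ₁ κ₂ : Cardinal.{0}) (hκ₁ : ℵ₀ ≤ κ₁) (hκ₁₂ : κ₁ ≤ κ₂) (hκ₂ : κ₂ ≤ #(X 0))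
    (D : Ordinal.{0} → Set (Set α))
    (hDsub : ∀ i < θ, ∀ Z ∈ D i, Z ⊆ X i ∧ #Z = κ₁)
    (hDdense : ∀ i < θ, ∀ Y ⊆ X i, #Y = κ₂ → ∃ Z ∈ D i, Z ⊆ Y) :
    (∀ κ₃ : Cardinal.{0}, κ₂ < κ₃ → κ₃ ≤ #(⋃ i ∈ Set.Iio θ, X i) →
      ∀ Y ⊆ ⋃ i ∈ Set.Iio θ, X i, #Y = κ₃ → ∃ Z ∈ ⋃ i ∈ Set.Iio θ, D i, Z ⊆ Y) ∧
    (θ.cof ≠ κ₂.ord.cof →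
      ∀ Y ⊆ ⋃ i ∈ Set.Iio θ, X i, #Y = κ₂ → ∃ Z ∈ ⋃ i ∈ Set.Iio θ, D i, Z ⊆ Y) := by
  have hκ₂inf : ℵ₀ ≤ κ₂ := hκ₁.trans hκ₁₂
  have main : ∀ Y : Set α, Y ⊆ (⋃ i ∈ Set.Iio θ, X i) →
      (κ₂ < #Y ∨ (#Y = κ₂ ∧ θ.cof ≠ κ₂.ord.cof)) →
      ∃ Z ∈ ⋃ i ∈ Set.Iio θ, D i, Z ⊆ Y := by
    intro Y hYsub hbig
    obtain ⟨i, hi, hcard⟩ := exists_inter_card_ge θ hθ X hmono κ₂ hκ₂inf Y hYsub hbig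
    obtain ⟨Y', hY'sub, hY'card⟩ := Cardinal.le_mk_iff_exists_subset.1 hcard
    have hY'Xi : Y' ⊆ X i := fun y hy => (hY'sub hy).2
    obtain ⟨Z, hZD, hZY'⟩ := hDdense i hi Y' hY'Xi hY'card
    exact ⟨Z, Set.mem_biUnion hi hZD, hZY'.trans (fun y hy => (hY'sub hy).1)⟩
  constructor
  · intro κ₃ hκ₂₃ _ Y hYsub hYcard
    exact main Y hYsub (Or.inl (hYcard ▸ hκ₂₃))
  · intro hne Y hYsub hYcard
    exact main Y hYsub (Or.inr ⟨hYcard, hne⟩)
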